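/- Let H be a cocommutative Hopf algebra over a commutative ring k with antipode S. Then S is a Rota-Baxter operator on H: S is a coalgebra homomorphism and, in Sweedler notation, S(a)S(b) = S(a₍₁₎ S(a₍₂₎) b S(S(a₍₃₎))) for all a, b ∈ H. -/

import Mathlib

open scoped TensorProduct

universe u v

section RBDef
variable (k : Type u) (A : Type v) [CommRing k] [Semiring A] [HopfAlgebra k A]

/-- In Sweedler notation, the linear map `a ⊗ b ↦ a₍₁₎ S(a₍₂₎) b S(S(a₍₃₎))`,
where `S` is the antipode. -/
noncomputable def rbRHS : A ⊗[k] A →ₗ[k] A :=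
  (LinearMap.mul' k A) ∘ₗ
  (TensorProduct.map LinearMap.id (LinearMap.mul' k A)) ∘ₗ
  (TensorProduct.map LinearMap.id
    (TensorProduct.map LinearMap.id (LinearMap.mul' k A))) ∘ₗ
  (TensorProduct.map LinearMap.id
    (TensorProduct.map LinearMap.id (TensorProduct.comm k A A).toLinearMap)) ∘ₗ
  (TensorProduct.map LinearMap.id (TensorProduct.assoc k A A A).toLinearMap) ∘ₗ
  (TensorProduct.assoc k A (A ⊗[k] A) A).toLinearMap ∘ₗ
  (TensorProduct.map
    ((TensorProduct.map LinearMap.id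
        (TensorProduct.map (HopfAlgebra.antipode (R := k))
          ((HopfAlgebra.antipode (R := k)) ∘ₗ (HopfAlgebra.antipode (R := k))))) ∘ₗ
      (TensorProduct.map LinearMap.id (Coalgebra.comul (R := k))) ∘ₗ
      (Coalgebra.comul (R := k)))
    LinearMap.id)

end RBDef

section RotaBaxterAux
open TensorProduct LinearMap
set_option maxHeartbeats 1000000
set_option synthInstance.maxHeartbeats 400000

section Conv
variable {k : Type*} [CommRing k]
variable {C B : Type*} [AddCommMonoid C] [Module k C] [Semiring B] [Algebra k B]
variable (dC : C →ₗ[k] C ⊗[k] C) (eC : C →ₗ[k] k)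

/-- Convolution product. -/
noncomputable def conv (f g : C →ₗ[k] B) : C →ₗ[k] B :=
  LinearMap.mul' k B ∘ₗ TensorProduct.map f g ∘ₗ dC

/-- Convolution unit. -/
noncomputable def cunit : C →ₗ[k] B := Algebra.linearMap k B ∘ₗ eC

lemma conv_apply_of_eq (f g : C →ₗ[k] B) {c : C} {ι : Type*} {s : Finset ι}
    {l r : ι → C} (h : dC c = ∑ i ∈ s, l i ⊗ₜ[k] r i) :
    conv dC f g c = ∑ i ∈ s, f (l i) * g (r i) := by
  simp [conv, h, map_sum]

lemma conv_assoc
    (Hco : ∀ c : C, TensorProduct.assoc k C C C (dC.rTensor C (dC c)) = dC.lTensor C (dC c))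
    (f g h : C →ₗ[k] B) :
    conv dC (conv dC f g) h = conv dC f (conv dC g h) := by
  have key : (LinearMap.mul' k B ∘ₗ TensorProduct.map f (LinearMap.mul' k B ∘ₗ TensorProduct.map g h))
        ∘ₗ (TensorProduct.assoc k C C C).toLinearMap
      = LinearMap.mul' k B ∘ₗ TensorProduct.map (LinearMap.mul' k B ∘ₗ TensorProduct.map f g) h := by
    apply TensorProduct.ext_threefold
    intro x y z
    simp [mul_assoc]
  have e1 : TensorProduct.map ((LinearMap.mul' k B ∘ₗ TensorProduct.map f g) ∘ₗ dC) h
      = TensorProduct.map (LinearMap.mul' k B ∘ₗ TensorProduct.map f g) h ∘ₗ dC.rTensor C := by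
    rw [LinearMap.rTensor, ← TensorProduct.map_comp]
    simp
  have e2 : TensorProduct.map f (((LinearMap.mul' k B ∘ₗ TensorProduct.map g h)) ∘ₗ dC)
      = TensorProduct.map f (LinearMap.mul' k B ∘ₗ TensorProduct.map g h) ∘ₗ dC.lTensor C := by
    rw [LinearMap.lTensor, ← TensorProduct.map_comp]
    simp
  ext c
  have h1 : conv dC (conv dC f g) h c
      = (LinearMap.mul' k B ∘ₗ TensorProduct.map (LinearMap.mul' k B ∘ₗ TensorProduct.map f g) h)
        (dC.rTensor C (dC c)) := by
    simp only [conv, LinearMap.comp_assoc, LinearMap.comp_apply] at e1 ⊢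
    rw [e1]
    rfl
  have h2 : conv dC f (conv dC g h) c
      = (LinearMap.mul' k B ∘ₗ TensorProduct.map f (LinearMap.mul' k B ∘ₗ TensorProduct.map g h))
        (dC.lTensor C (dC c)) := by
    simp only [conv, LinearMap.comp_assoc, LinearMap.comp_apply] at e2 ⊢
    rw [e2]
    rfl
  rw [h1, h2, ← Hco c]
  exact (LinearMap.congr_fun key (dC.rTensor C (dC c))).symm


lemma conv_unit_left
    (Hl : ∀ c : C, eC.rTensor C (dC c) = (1 : k) ⊗ₜ[k] c) (f : C →ₗ[k] B) :
    conv dC (cunit (B := B) eC) f = f := by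
  ext c
  obtain ⟨s, hs⟩ := TensorProduct.exists_finset (dC c)
  have h1 := Hl c
  rw [hs, map_sum] at h1
  simp only [rTensor_tmul] at h1
  have h2 := congrArg (⇑(TensorProduct.lid k C)) h1
  simp only [map_sum, lid_tmul, one_smul] at h2
  have h3 : conv dC (cunit (B := B) eC) f c = ∑ i ∈ s, (cunit (B := B) eC) i.1 * f i.2 :=
    conv_apply_of_eq dC _ f hs
  rw [h3]
  rw [← h2, map_sum]
  apply Finset.sum_congr rfl
  intro i _
  simp [cunit, Algebra.smul_def]

lemma conv_unit_right
    (Hr : ∀ c : C, eC.lTensor C (dC c) = c ⊗ₜ[k] (1 : k)) (f : C →ₗ[k] B) :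
    conv dC f (cunit (B := B) eC) = f := by
  ext c
  obtain ⟨s, hs⟩ := TensorProduct.exists_finset (dC c)
  have h1 := Hr c
  rw [hs, map_sum] at h1
  simp only [lTensor_tmul] at h1
  have h2 := congrArg (⇑(TensorProduct.rid k C)) h1
  simp only [map_sum, rid_tmul, one_smul] at h2
  have h3 : conv dC f (cunit (B := B) eC) c = ∑ i ∈ s, f i.1 * (cunit (B := B) eC) i.2 :=
    conv_apply_of_eq dC f _ hs
  rw [h3]
  rw [← h2, map_sum]
  apply Finset.sum_congr rfl
  intro i _
  simp [cunit, Algebra.smul_def, Algebra.commutes]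

lemma conv_inv_unique
    (Hco : ∀ c : C, TensorProduct.assoc k C C C (dC.rTensor C (dC c)) = dC.lTensor C (dC c))
    (Hl : ∀ c : C, eC.rTensor C (dC c) = (1 : k) ⊗ₜ[k] c)
    (Hr : ∀ c : C, eC.lTensor C (dC c) = c ⊗ₜ[k] (1 : k))
    {f g n : C →ₗ[k] B} (h1 : conv dC n f = cunit eC) (h2 : conv dC f g = cunit eC) :
    n = g := by
  have h := conv_assoc dC Hco n f g
  rw [h1, h2, conv_unit_left dC eC Hl g, conv_unit_right dC eC Hr n] at h
  exact h.symm

end Conv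

section Hopf
open Coalgebra HopfAlgebra Bialgebra
open scoped Coalgebra

variable {k : Type*} {A : Type*} [CommRing k] [Semiring A] [HopfAlgebra k A]

/-- scalar form of the left counit law -/
lemma sum_counit_smul {a : A} {ι : Type*} (r : Coalgebra.Repr k a ι) :
    ∑ i ∈ r.index, (Coalgebra.counit (R := k) (r.left i)) • r.right i = a := by
  have h2 := congrArg (⇑(TensorProduct.lid k A)) (Coalgebra.sum_counit_tmul_eq (R := k) r)
  simp only [map_sum, TensorProduct.lid_tmul, one_smul] at h2
  exact h2

/-- swapped representation, using cocommutativity -/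
noncomputable def swapRepr
    (hcc : ∀ a : A, TensorProduct.comm k A A (Coalgebra.comul (R := k) a)
      = Coalgebra.comul (R := k) a)
    {a : A} {ι : Type*} (r : Coalgebra.Repr k a ι) : Coalgebra.Repr k a ι where
  index := r.index
  left := r.right
  right := r.left
  eq := by
    have h := congrArg (⇑(TensorProduct.comm k A A)) r.eq
    rw [hcc] at h
    simpa [map_sum] using h

lemma S_one : HopfAlgebra.antipode (R := k) (1 : A) = 1 := by
  have h := HopfAlgebra.mul_antipode_rTensor_comul_apply (R := k) (1 : A)
  simpa [Algebra.TensorProduct.one_def] using h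

lemma counit_S (a : A) :
    Coalgebra.counit (R := k) (HopfAlgebra.antipode (R := k) a)
      = Coalgebra.counit (R := k) a := by
  have h := congrArg (⇑(Coalgebra.counit (R := k) (A := A)))
    (HopfAlgebra.sum_mul_antipode_eq_algebraMap_counit (R := k) (ℛ k a))
  simp only [map_sum, Bialgebra.counit_mul] at h
  have h2 : ∑ i ∈ (ℛ k a).index,
      Coalgebra.counit (R := k) ((ℛ k a).left i) *
        Coalgebra.counit (R := k) (HopfAlgebra.antipode (R := k) ((ℛ k a).right i))
      = Coalgebra.counit (R := k)
          (HopfAlgebra.antipode (R := k)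
            (∑ i ∈ (ℛ k a).index, Coalgebra.counit (R := k) ((ℛ k a).left i) • (ℛ k a).right i)) := by
    simp [map_sum, smul_eq_mul]
  rw [h2, _root_.sum_counit_smul] at h
  rw [h]
  have : Coalgebra.counit (R := k) (algebraMap k A (Coalgebra.counit (R := k) a))
      = Coalgebra.counit (R := k) a := by
    rw [Algebra.algebraMap_eq_smul_one, map_smul, Bialgebra.counit_one, smul_eq_mul, mul_one]
  rw [this]


/-- scalar form of the right counit law -/
lemma sum_smul_counit {a : A} {ι : Type*} (r : Coalgebra.Repr k a ι) :
    ∑ i ∈ r.index, (Coalgebra.counit (R := k) (r.right i)) • r.left i = a := by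
  have h2 := congrArg (⇑(TensorProduct.rid k A)) (Coalgebra.sum_tmul_counit_eq (R := k) r)
  simp only [map_sum, TensorProduct.rid_tmul, one_smul] at h2
  exact h2

variable (k A) in
/-- comultiplication on `A ⊗ A` -/
noncomputable def dC2 : (A ⊗[k] A) →ₗ[k] (A ⊗[k] A) ⊗[k] (A ⊗[k] A) :=
  (TensorProduct.tensorTensorTensorComm k A A A A).toLinearMap ∘ₗ
    TensorProduct.map (Coalgebra.comul (R := k)) (Coalgebra.comul (R := k))

variable (k A) in
/-- counit on `A ⊗ A` -/
noncomputable def eC2 : (A ⊗[k] A) →ₗ[k] k :=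
  LinearMap.mul' k k ∘ₗ TensorProduct.map (Coalgebra.counit (R := k)) (Coalgebra.counit (R := k))

lemma dC2_tmul (x y : A) {ι κ : Type*} (rx : Coalgebra.Repr k x ι) (ry : Coalgebra.Repr k y κ) :
    dC2 k A (x ⊗ₜ[k] y) = ∑ i ∈ rx.index, ∑ j ∈ ry.index,
      (rx.left i ⊗ₜ[k] ry.left j) ⊗ₜ[k] (rx.right i ⊗ₜ[k] ry.right j) := by
  simp only [dC2, LinearMap.comp_apply, TensorProduct.map_tmul, ← rx.eq, ← ry.eq]
  rw [TensorProduct.sum_tmul, map_sum]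
  refine Finset.sum_congr rfl fun i _ => ?_
  rw [TensorProduct.tmul_sum, map_sum]
  refine Finset.sum_congr rfl fun j _ => ?_
  simp

lemma smul_tmul_one_aux (c d : k) (r t : A) :
    (c * d) ⊗ₜ[k] (r ⊗ₜ[k] t) = (1 : k) ⊗ₜ[k] ((c • r) ⊗ₜ[k] (d • t)) := by
  have h1 : (c • r) ⊗ₜ[k] (d • t) = (c * d) • (r ⊗ₜ[k] t) := by
    rw [TensorProduct.tmul_smul, TensorProduct.smul_tmul', ← mul_smul, mul_comm d c,
      TensorProduct.smul_tmul']
  rw [h1, TensorProduct.tmul_smul]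
  rw [show ((c * d) • ((1:k) ⊗ₜ[k] (r ⊗ₜ[k] t))) = ((c*d) • (1:k)) ⊗ₜ[k] (r ⊗ₜ[k] t) from
    TensorProduct.smul_tmul' _ _ _]
  rw [smul_eq_mul, mul_one]

lemma tmul_one_smul_aux (c d : k) (r t : A) :
    (r ⊗ₜ[k] t) ⊗ₜ[k] (c * d)  = ((c • r) ⊗ₜ[k] (d • t)) ⊗ₜ[k] (1 : k) := by
  have h1 : (c • r) ⊗ₜ[k] (d • t) = (c * d) • (r ⊗ₜ[k] t) := by
    rw [TensorProduct.tmul_smul, TensorProduct.smul_tmul', ← mul_smul, mul_comm d c,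
      TensorProduct.smul_tmul']
  rw [h1, TensorProduct.smul_tmul, smul_eq_mul, mul_one]

lemma Hl2 : ∀ w : A ⊗[k] A, (eC2 k A).rTensor (A ⊗[k] A) (dC2 k A w) = (1 : k) ⊗ₜ[k] w := by
  suffices h : (eC2 k A).rTensor (A ⊗[k] A) ∘ₗ dC2 k A
      = TensorProduct.mk k k (A ⊗[k] A) 1 from fun w => LinearMap.congr_fun h w
  apply TensorProduct.ext'
  intro x y
  simp only [LinearMap.comp_apply, TensorProduct.mk_apply]
  rw [dC2_tmul x y (ℛ k x) (ℛ k y)]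
  simp only [map_sum, LinearMap.rTensor_tmul, eC2, LinearMap.comp_apply,
    TensorProduct.map_tmul, LinearMap.mul'_apply]
  calc ∑ i ∈ (ℛ k x).index, ∑ j ∈ (ℛ k y).index,
        (Coalgebra.counit (R := k) ((ℛ k x).left i) * Coalgebra.counit (R := k) ((ℛ k y).left j))
          ⊗ₜ[k] ((ℛ k x).right i ⊗ₜ[k] (ℛ k y).right j)
      = ∑ i ∈ (ℛ k x).index, ∑ j ∈ (ℛ k y).index, (1 : k) ⊗ₜ[k]
          ((Coalgebra.counit (R := k) ((ℛ k x).left i) • (ℛ k x).right i) ⊗ₜ[k]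
           (Coalgebra.counit (R := k) ((ℛ k y).left j) • (ℛ k y).right j)) := by
        exact Finset.sum_congr rfl fun i _ => Finset.sum_congr rfl fun j _ =>
          smul_tmul_one_aux _ _ _ _
    _ = ∑ i ∈ (ℛ k x).index, (1 : k) ⊗ₜ[k]
          ((Coalgebra.counit (R := k) ((ℛ k x).left i) • (ℛ k x).right i) ⊗ₜ[k] y) := by
        refine Finset.sum_congr rfl fun i _ => ?_
        rw [← TensorProduct.tmul_sum, ← TensorProduct.tmul_sum, _root_.sum_counit_smul]
    _ = (1 : k) ⊗ₜ[k] (x ⊗ₜ[k] y) := by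
        rw [← TensorProduct.tmul_sum, ← TensorProduct.sum_tmul, _root_.sum_counit_smul]

lemma Hr2 : ∀ w : A ⊗[k] A, (eC2 k A).lTensor (A ⊗[k] A) (dC2 k A w) = w ⊗ₜ[k] (1 : k) := by
  suffices h : (eC2 k A).lTensor (A ⊗[k] A) ∘ₗ dC2 k A
      = (TensorProduct.mk k (A ⊗[k] A) k).flip 1 from fun w => LinearMap.congr_fun h w
  apply TensorProduct.ext'
  intro x y
  simp only [LinearMap.comp_apply, TensorProduct.mk_apply, LinearMap.flip_apply]
  rw [dC2_tmul x y (ℛ k x) (ℛ k y)]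
  simp only [map_sum, LinearMap.lTensor_tmul, eC2, LinearMap.comp_apply,
    TensorProduct.map_tmul, LinearMap.mul'_apply]
  calc ∑ i ∈ (ℛ k x).index, ∑ j ∈ (ℛ k y).index,
        ((ℛ k x).left i ⊗ₜ[k] (ℛ k y).left j) ⊗ₜ[k]
          (Coalgebra.counit (R := k) ((ℛ k x).right i) * Coalgebra.counit (R := k) ((ℛ k y).right j))
      = ∑ i ∈ (ℛ k x).index, ∑ j ∈ (ℛ k y).index,
          ((Coalgebra.counit (R := k) ((ℛ k x).right i) • (ℛ k x).left i) ⊗ₜ[k]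
           (Coalgebra.counit (R := k) ((ℛ k y).right j) • (ℛ k y).left j)) ⊗ₜ[k] (1 : k) := by
        exact Finset.sum_congr rfl fun i _ => Finset.sum_congr rfl fun j _ =>
          tmul_one_smul_aux _ _ _ _
    _ = ∑ i ∈ (ℛ k x).index,
          ((Coalgebra.counit (R := k) ((ℛ k x).right i) • (ℛ k x).left i) ⊗ₜ[k] y) ⊗ₜ[k] (1 : k) := by
        refine Finset.sum_congr rfl fun i _ => ?_
        rw [← TensorProduct.sum_tmul, ← TensorProduct.tmul_sum, sum_smul_counit]
    _ = (x ⊗ₜ[k] y) ⊗ₜ[k] (1 : k) := by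
        rw [← TensorProduct.sum_tmul, ← TensorProduct.sum_tmul, sum_smul_counit]


lemma sum4_swap {M : Type*} [AddCommMonoid M] {ι κ : Type*} {π : ι → Type*} {ρ : κ → Type*}
    (s : Finset ι) (t : Finset κ) (P : ∀ i, Finset (π i)) (Q : ∀ j, Finset (ρ j))
    (f : ∀ i j, π i → ρ j → M) :
    ∑ i ∈ s, ∑ j ∈ t, ∑ p ∈ P i, ∑ q ∈ Q j, f i j p q
      = ∑ j ∈ t, ∑ q ∈ Q j, ∑ i ∈ s, ∑ p ∈ P i, f i j p q := by
  rw [Finset.sum_comm]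
  refine Finset.sum_congr rfl fun j _ => ?_
  rw [show (∑ i ∈ s, ∑ p ∈ P i, ∑ q ∈ Q j, f i j p q)
      = ∑ i ∈ s, ∑ q ∈ Q j, ∑ p ∈ P i, f i j p q from
    Finset.sum_congr rfl fun i _ => Finset.sum_comm]
  exact Finset.sum_comm

lemma Hco2 : ∀ w : A ⊗[k] A,
    TensorProduct.assoc k (A ⊗[k] A) (A ⊗[k] A) (A ⊗[k] A)
      ((dC2 k A).rTensor (A ⊗[k] A) (dC2 k A w)) = (dC2 k A).lTensor (A ⊗[k] A) (dC2 k A w) := by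
  suffices h : (TensorProduct.assoc k (A ⊗[k] A) (A ⊗[k] A) (A ⊗[k] A)).toLinearMap ∘ₗ
      (dC2 k A).rTensor (A ⊗[k] A) ∘ₗ dC2 k A = (dC2 k A).lTensor (A ⊗[k] A) ∘ₗ dC2 k A from
    fun w => LinearMap.congr_fun h w
  apply TensorProduct.ext'
  intro x y
  simp only [LinearMap.comp_apply, LinearEquiv.coe_coe]
  rw [dC2_tmul x y (ℛ k x) (ℛ k y)]
  simp only [map_sum, LinearMap.rTensor_tmul, LinearMap.lTensor_tmul]
  have hLHS : ∀ i ∈ (ℛ k x).index, ∀ j ∈ (ℛ k y).index,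
      TensorProduct.assoc k (A ⊗[k] A) (A ⊗[k] A) (A ⊗[k] A)
        ((dC2 k A) ((ℛ k x).left i ⊗ₜ[k] (ℛ k y).left j) ⊗ₜ[k]
          ((ℛ k x).right i ⊗ₜ[k] (ℛ k y).right j))
      = ∑ p ∈ (ℛ k ((ℛ k x).left i)).index, ∑ q ∈ (ℛ k ((ℛ k y).left j)).index,
          ((ℛ k ((ℛ k x).left i)).left p ⊗ₜ[k] (ℛ k ((ℛ k y).left j)).left q) ⊗ₜ[k]
            (((ℛ k ((ℛ k x).left i)).right p ⊗ₜ[k] (ℛ k ((ℛ k y).left j)).right q) ⊗ₜ[k]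
              ((ℛ k x).right i ⊗ₜ[k] (ℛ k y).right j)) := by
    intro i _ j _
    rw [dC2_tmul _ _ (ℛ k ((ℛ k x).left i)) (ℛ k ((ℛ k y).left j))]
    rw [TensorProduct.sum_tmul, map_sum]
    refine Finset.sum_congr rfl fun p _ => ?_
    rw [TensorProduct.sum_tmul, map_sum]
    exact Finset.sum_congr rfl fun q _ => TensorProduct.assoc_tmul _ _ _
  have hRHS : ∀ i ∈ (ℛ k x).index, ∀ j ∈ (ℛ k y).index,
      ((ℛ k x).left i ⊗ₜ[k] (ℛ k y).left j) ⊗ₜ[k]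
        ((dC2 k A) ((ℛ k x).right i ⊗ₜ[k] (ℛ k y).right j))
      = ∑ p ∈ (ℛ k ((ℛ k x).right i)).index, ∑ q ∈ (ℛ k ((ℛ k y).right j)).index,
          ((ℛ k x).left i ⊗ₜ[k] (ℛ k y).left j) ⊗ₜ[k]
            (((ℛ k ((ℛ k x).right i)).left p ⊗ₜ[k] (ℛ k ((ℛ k y).right j)).left q) ⊗ₜ[k]
              ((ℛ k ((ℛ k x).right i)).right p ⊗ₜ[k] (ℛ k ((ℛ k y).right j)).right q)) := by
    intro i _ j _
    rw [dC2_tmul _ _ (ℛ k ((ℛ k x).right i)) (ℛ k ((ℛ k y).right j))]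
    rw [TensorProduct.tmul_sum]
    exact Finset.sum_congr rfl fun p _ => TensorProduct.tmul_sum _ _ _
  rw [Finset.sum_congr rfl fun i hi => Finset.sum_congr rfl fun j hj => hLHS i hi j hj,
    Finset.sum_congr rfl fun i hi => Finset.sum_congr rfl fun j hj => hRHS i hi j hj]
  -- now both sides are 4-fold nested sums; use cocommutative-style coassoc via P8
  set P8 : (A ⊗[k] (A ⊗[k] A)) ⊗[k] (A ⊗[k] (A ⊗[k] A)) →ₗ[k]
      (A ⊗[k] A) ⊗[k] ((A ⊗[k] A) ⊗[k] (A ⊗[k] A)) :=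
    (TensorProduct.map LinearMap.id (TensorProduct.tensorTensorTensorComm k A A A A).toLinearMap) ∘ₗ
      (TensorProduct.tensorTensorTensorComm k A (A ⊗[k] A) A (A ⊗[k] A)).toLinearMap with hP8
  have hx := Coalgebra.sum_tmul_tmul_eq (ℛ k x)
    (fun i => ℛ k ((ℛ k x).left i)) (fun i => ℛ k ((ℛ k x).right i))
  have hy := Coalgebra.sum_tmul_tmul_eq (ℛ k y)
    (fun j => ℛ k ((ℛ k y).left j)) (fun j => ℛ k ((ℛ k y).right j))
  have hxy : (∑ i ∈ (ℛ k x).index, ∑ p ∈ (ℛ k ((ℛ k x).left i)).index,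
        (ℛ k ((ℛ k x).left i)).left p ⊗ₜ[k] ((ℛ k ((ℛ k x).left i)).right p ⊗ₜ[k] (ℛ k x).right i))
      ⊗ₜ[k] (∑ j ∈ (ℛ k y).index, ∑ q ∈ (ℛ k ((ℛ k y).left j)).index,
        (ℛ k ((ℛ k y).left j)).left q ⊗ₜ[k] ((ℛ k ((ℛ k y).left j)).right q ⊗ₜ[k] (ℛ k y).right j))
      = (∑ i ∈ (ℛ k x).index, ∑ p ∈ (ℛ k ((ℛ k x).right i)).index,
        (ℛ k x).left i ⊗ₜ[k] ((ℛ k ((ℛ k x).right i)).left p ⊗ₜ[k] (ℛ k ((ℛ k x).right i)).right p))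
      ⊗ₜ[k] (∑ j ∈ (ℛ k y).index, ∑ q ∈ (ℛ k ((ℛ k y).right j)).index,
        (ℛ k y).left j ⊗ₜ[k] ((ℛ k ((ℛ k y).right j)).left q ⊗ₜ[k] (ℛ k ((ℛ k y).right j)).right q)) := by
    rw [hx, hy]
  have H := congrArg (⇑P8) hxy
  simp only [TensorProduct.sum_tmul, TensorProduct.tmul_sum, map_sum, hP8,
    LinearMap.comp_apply, LinearEquiv.coe_coe, TensorProduct.tensorTensorTensorComm_tmul,
    TensorProduct.map_tmul, LinearMap.id_coe, id_eq] at H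
  exact (sum4_swap _ _ _ _ _).trans (H.trans (sum4_swap _ _ _ _ _).symm)


lemma dC2_tmul' (x y : A) {ι κ : Type*} (rx : Coalgebra.Repr k x ι) (ry : Coalgebra.Repr k y κ) :
    dC2 k A (x ⊗ₜ[k] y) = ∑ p ∈ rx.index ×ˢ ry.index,
      (rx.left p.1 ⊗ₜ[k] ry.left p.2) ⊗ₜ[k] (rx.right p.1 ⊗ₜ[k] ry.right p.2) := by
  rw [dC2_tmul x y rx ry, ← Finset.sum_product']

lemma comul_mul_repr (x y : A) {ι κ : Type*} (rx : Coalgebra.Repr k x ι) (ry : Coalgebra.Repr k y κ) :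
    Coalgebra.comul (R := k) (x * y) = ∑ i ∈ rx.index, ∑ j ∈ ry.index,
      (rx.left i * ry.left j) ⊗ₜ[k] (rx.right i * ry.right j) := by
  rw [Bialgebra.comul_mul, ← rx.eq, ← ry.eq, Finset.sum_mul_sum]
  simp [Algebra.TensorProduct.tmul_mul_tmul]

lemma convNF : conv (dC2 k A) ((HopfAlgebra.antipode (R := k)) ∘ₗ LinearMap.mul' k A)
    (LinearMap.mul' k A) = cunit (eC2 k A) := by
  apply TensorProduct.ext'
  intro x y
  rw [conv_apply_of_eq _ _ _ (dC2_tmul' x y (ℛ k x) (ℛ k y))]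
  have hc := comul_mul_repr x y (ℛ k x) (ℛ k y)
  have h2 := congrArg (fun z => LinearMap.mul' k A
    ((HopfAlgebra.antipode (R := k)).rTensor A z)) hc
  simp only [map_sum, LinearMap.rTensor_tmul, LinearMap.mul'_apply] at h2
  rw [HopfAlgebra.mul_antipode_rTensor_comul_apply] at h2
  rw [Finset.sum_product]
  simp only [LinearMap.comp_apply, TensorProduct.map_tmul, LinearMap.mul'_apply]
  rw [← h2]
  simp [cunit, eC2, Bialgebra.counit_mul]

lemma convFG : conv (dC2 k A) (LinearMap.mul' k A)
    (LinearMap.mul' k A ∘ₗ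
      TensorProduct.map (HopfAlgebra.antipode (R := k)) (HopfAlgebra.antipode (R := k)) ∘ₗ
      (TensorProduct.comm k A A).toLinearMap) = cunit (eC2 k A) := by
  apply TensorProduct.ext'
  intro x y
  rw [conv_apply_of_eq _ _ _ (dC2_tmul' x y (ℛ k x) (ℛ k y))]
  rw [Finset.sum_product]
  simp only [LinearMap.comp_apply, TensorProduct.map_tmul, LinearMap.mul'_apply,
    LinearEquiv.coe_coe, TensorProduct.comm_tmul]
  have step1 : ∀ i ∈ (ℛ k x).index,
      ∑ j ∈ (ℛ k y).index,
        ((ℛ k x).left i * (ℛ k y).left j) *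
          (HopfAlgebra.antipode (R := k) ((ℛ k y).right j) *
            HopfAlgebra.antipode (R := k) ((ℛ k x).right i))
      = Coalgebra.counit (R := k) y •
          ((ℛ k x).left i * HopfAlgebra.antipode (R := k) ((ℛ k x).right i)) := by
    intro i _
    have : ∀ j ∈ (ℛ k y).index,
        ((ℛ k x).left i * (ℛ k y).left j) *
          (HopfAlgebra.antipode (R := k) ((ℛ k y).right j) *
            HopfAlgebra.antipode (R := k) ((ℛ k x).right i))
        = ((ℛ k x).left i *
            ((ℛ k y).left j * HopfAlgebra.antipode (R := k) ((ℛ k y).right j))) *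
            HopfAlgebra.antipode (R := k) ((ℛ k x).right i) := by
      intro j _
      rw [mul_assoc, mul_assoc, mul_assoc]
    rw [Finset.sum_congr rfl this, ← Finset.sum_mul, ← Finset.mul_sum,
      HopfAlgebra.sum_mul_antipode_eq_smul (ℛ k y)]
    rw [mul_smul_comm, mul_one, smul_mul_assoc]
  rw [Finset.sum_congr rfl step1, ← Finset.smul_sum,
    HopfAlgebra.sum_mul_antipode_eq_smul (ℛ k x)]
  simp [cunit, eC2, Algebra.algebraMap_eq_smul_one, smul_smul, mul_comm]

lemma anti_mul (x y : A) :
    HopfAlgebra.antipode (R := k) (x * y)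
      = HopfAlgebra.antipode (R := k) y * HopfAlgebra.antipode (R := k) x := by
  have h := conv_inv_unique (dC2 k A) (eC2 k A) Hco2 Hl2 Hr2 convNF convFG
  have h2 := LinearMap.congr_fun h (x ⊗ₜ[k] y)
  simpa using h2


lemma HcoA : ∀ a : A, TensorProduct.assoc k A A A
    ((Coalgebra.comul (R := k) (A := A)).rTensor A (Coalgebra.comul (R := k) a))
    = (Coalgebra.comul (R := k) (A := A)).lTensor A (Coalgebra.comul (R := k) a) :=
  fun a => Coalgebra.coassoc_apply a

lemma HlA : ∀ a : A, (Coalgebra.counit (R := k) (A := A)).rTensor A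
    (Coalgebra.comul (R := k) a) = (1 : k) ⊗ₜ[k] a :=
  fun a => Coalgebra.rTensor_counit_comul a

lemma HrA : ∀ a : A, (Coalgebra.counit (R := k) (A := A)).lTensor A
    (Coalgebra.comul (R := k) a) = a ⊗ₜ[k] (1 : k) :=
  fun a => Coalgebra.lTensor_counit_comul a

lemma hSid : conv (Coalgebra.comul (R := k)) (HopfAlgebra.antipode (R := k) (A := A))
    LinearMap.id = cunit (Coalgebra.counit (R := k)) :=
  HopfAlgebra.mul_antipode_rTensor_comul

lemma hidS : conv (Coalgebra.comul (R := k)) LinearMap.id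
    (HopfAlgebra.antipode (R := k) (A := A)) = cunit (Coalgebra.counit (R := k)) :=
  HopfAlgebra.mul_antipode_lTensor_comul

variable (hcc : ∀ a : A, TensorProduct.comm k A A (Coalgebra.comul (R := k) a)
      = Coalgebra.comul (R := k) a)

include hcc in
lemma hS2S : conv (Coalgebra.comul (R := k))
    ((HopfAlgebra.antipode (R := k) (A := A)) ∘ₗ HopfAlgebra.antipode (R := k))
    (HopfAlgebra.antipode (R := k)) = cunit (Coalgebra.counit (R := k)) := by
  ext a
  rw [conv_apply_of_eq _ _ _ (ℛ k a).eq.symm]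
  have e1 : ∀ i ∈ (ℛ k a).index,
      ((HopfAlgebra.antipode (R := k) (A := A)) ∘ₗ HopfAlgebra.antipode (R := k)) ((ℛ k a).left i)
        * HopfAlgebra.antipode (R := k) ((ℛ k a).right i)
      = HopfAlgebra.antipode (R := k)
          ((ℛ k a).right i * HopfAlgebra.antipode (R := k) ((ℛ k a).left i)) := by
    intro i _
    rw [LinearMap.comp_apply, anti_mul]
  rw [Finset.sum_congr rfl e1, ← map_sum]
  have e2 := HopfAlgebra.sum_mul_antipode_eq_smul (swapRepr hcc (ℛ k a))
  have e3 : ∑ i ∈ (ℛ k a).index,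
      (ℛ k a).right i * HopfAlgebra.antipode (R := k) ((ℛ k a).left i)
      = Coalgebra.counit (R := k) a • (1 : A) := e2
  rw [e3, map_smul, S_one]
  simp [cunit, Algebra.algebraMap_eq_smul_one]

include hcc in
lemma S_S_eq_id :
    (HopfAlgebra.antipode (R := k) (A := A)) ∘ₗ HopfAlgebra.antipode (R := k)
      = LinearMap.id :=
  conv_inv_unique (Coalgebra.comul (R := k)) (Coalgebra.counit (R := k))
    HcoA HlA HrA (hS2S hcc) hSid


lemma conv_comul_comulS :
    conv (Coalgebra.comul (R := k)) (Coalgebra.comul (R := k) (A := A))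
      ((Coalgebra.comul (R := k)) ∘ₗ (HopfAlgebra.antipode (R := k)))
      = cunit (B := A ⊗[k] A) (Coalgebra.counit (R := k)) := by
  ext a
  rw [conv_apply_of_eq _ _ _ (ℛ k a).eq.symm]
  have e1 : ∀ i ∈ (ℛ k a).index,
      Coalgebra.comul (R := k) ((ℛ k a).left i) *
        ((Coalgebra.comul (R := k)) ∘ₗ (HopfAlgebra.antipode (R := k))) ((ℛ k a).right i)
      = Coalgebra.comul (R := k)
          ((ℛ k a).left i * HopfAlgebra.antipode (R := k) ((ℛ k a).right i)) := by
    intro i _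
    rw [LinearMap.comp_apply, Bialgebra.comul_mul]
  rw [Finset.sum_congr rfl e1, ← map_sum, HopfAlgebra.sum_mul_antipode_eq_smul (ℛ k a),
    map_smul, Bialgebra.comul_one]
  simp [cunit, Algebra.algebraMap_eq_smul_one]

lemma conv_comulS_comul :
    conv (Coalgebra.comul (R := k))
      ((Coalgebra.comul (R := k) (A := A)) ∘ₗ (HopfAlgebra.antipode (R := k)))
      (Coalgebra.comul (R := k))
      = cunit (B := A ⊗[k] A) (Coalgebra.counit (R := k)) := by
  ext a
  rw [conv_apply_of_eq _ _ _ (ℛ k a).eq.symm]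
  have e1 : ∀ i ∈ (ℛ k a).index,
      ((Coalgebra.comul (R := k)) ∘ₗ (HopfAlgebra.antipode (R := k))) ((ℛ k a).left i) *
        Coalgebra.comul (R := k) ((ℛ k a).right i)
      = Coalgebra.comul (R := k)
          (HopfAlgebra.antipode (R := k) ((ℛ k a).left i) * (ℛ k a).right i) := by
    intro i _
    rw [LinearMap.comp_apply, Bialgebra.comul_mul]
  rw [Finset.sum_congr rfl e1, ← map_sum, HopfAlgebra.sum_antipode_mul_eq_smul (ℛ k a),
    map_smul, Bialgebra.comul_one]
  simp [cunit, Algebra.algebraMap_eq_smul_one]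

include hcc in
lemma conv_comul_SS :
    conv (Coalgebra.comul (R := k)) (Coalgebra.comul (R := k) (A := A))
      ((TensorProduct.map (HopfAlgebra.antipode (R := k)) (HopfAlgebra.antipode (R := k)))
        ∘ₗ (Coalgebra.comul (R := k)))
      = cunit (B := A ⊗[k] A) (Coalgebra.counit (R := k)) := by
  ext a
  rw [conv_apply_of_eq _ _ _ (ℛ k a).eq.symm]
  -- Step A+B: rewrite each term as a double sum
  have eAB : ∀ i ∈ (ℛ k a).index,
      Coalgebra.comul (R := k) ((ℛ k a).left i) *
        ((TensorProduct.map (HopfAlgebra.antipode (R := k)) (HopfAlgebra.antipode (R := k)))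
          ∘ₗ (Coalgebra.comul (R := k))) ((ℛ k a).right i)
      = ∑ j ∈ (ℛ k ((ℛ k a).left i)).index, ∑ p ∈ (ℛ k ((ℛ k a).right i)).index,
          ((ℛ k ((ℛ k a).left i)).left j *
            HopfAlgebra.antipode (R := k) ((ℛ k ((ℛ k a).right i)).right p)) ⊗ₜ[k]
          ((ℛ k ((ℛ k a).left i)).right j *
            HopfAlgebra.antipode (R := k) ((ℛ k ((ℛ k a).right i)).left p)) := by
    intro i _
    have hA : ((TensorProduct.map (HopfAlgebra.antipode (R := k))
          (HopfAlgebra.antipode (R := k))) ∘ₗ (Coalgebra.comul (R := k))) ((ℛ k a).right i)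
        = ∑ p ∈ (ℛ k ((ℛ k a).right i)).index,
            HopfAlgebra.antipode (R := k) ((ℛ k ((ℛ k a).right i)).right p) ⊗ₜ[k]
            HopfAlgebra.antipode (R := k) ((ℛ k ((ℛ k a).right i)).left p) := by
      rw [LinearMap.comp_apply, ← hcc ((ℛ k a).right i), ← (ℛ k ((ℛ k a).right i)).eq]
      simp [map_sum]
    rw [hA, ← (ℛ k ((ℛ k a).left i)).eq, Finset.sum_mul_sum]
    simp [Algebra.TensorProduct.tmul_mul_tmul]
  rw [Finset.sum_congr rfl eAB]
  -- Step C : the four-fold coassociativity identity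
  have hx := Coalgebra.sum_tmul_tmul_eq (ℛ k a)
    (fun i => ℛ k ((ℛ k a).left i)) (fun i => ℛ k ((ℛ k a).right i))
  set L : A ⊗[k] (A ⊗[k] A) →ₗ[k] A ⊗[k] (A ⊗[k] (A ⊗[k] A)) :=
    TensorProduct.map LinearMap.id
      (TensorProduct.map LinearMap.id (Coalgebra.comul (R := k))) with hL
  have hC := congrArg (⇑L) hx
  simp only [map_sum, hL, TensorProduct.map_tmul, LinearMap.id_coe, id_eq] at hC
  -- expand comul of last / inner legs
  have hCL : ∑ i ∈ (ℛ k a).index, ∑ j ∈ (ℛ k ((ℛ k a).left i)).index,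
        (ℛ k ((ℛ k a).left i)).left j ⊗ₜ[k] ((ℛ k ((ℛ k a).left i)).right j ⊗ₜ[k]
          Coalgebra.comul (R := k) ((ℛ k a).right i))
      = ∑ i ∈ (ℛ k a).index, ∑ j ∈ (ℛ k ((ℛ k a).left i)).index,
          ∑ p ∈ (ℛ k ((ℛ k a).right i)).index,
          (ℛ k ((ℛ k a).left i)).left j ⊗ₜ[k] ((ℛ k ((ℛ k a).left i)).right j ⊗ₜ[k]
            ((ℛ k ((ℛ k a).right i)).left p ⊗ₜ[k] (ℛ k ((ℛ k a).right i)).right p)) := by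
    refine Finset.sum_congr rfl fun i _ => Finset.sum_congr rfl fun j _ => ?_
    rw [← (ℛ k ((ℛ k a).right i)).eq, TensorProduct.tmul_sum, TensorProduct.tmul_sum]
  have hCR : ∑ i ∈ (ℛ k a).index, ∑ p ∈ (ℛ k ((ℛ k a).right i)).index,
        (ℛ k a).left i ⊗ₜ[k] ((ℛ k ((ℛ k a).right i)).left p ⊗ₜ[k]
          Coalgebra.comul (R := k) ((ℛ k ((ℛ k a).right i)).right p))
      = ∑ i ∈ (ℛ k a).index, ∑ p ∈ (ℛ k ((ℛ k a).right i)).index,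
          ∑ q ∈ (ℛ k ((ℛ k ((ℛ k a).right i)).left p)).index,
          (ℛ k a).left i ⊗ₜ[k]
            ((ℛ k ((ℛ k ((ℛ k a).right i)).left p)).left q ⊗ₜ[k]
              ((ℛ k ((ℛ k ((ℛ k a).right i)).left p)).right q ⊗ₜ[k]
                (ℛ k ((ℛ k a).right i)).right p)) := by
    refine Finset.sum_congr rfl fun i _ => ?_
    have hri := Coalgebra.sum_tmul_tmul_eq (ℛ k ((ℛ k a).right i))
      (fun p => ℛ k ((ℛ k ((ℛ k a).right i)).left p))
      (fun p => ℛ k ((ℛ k ((ℛ k a).right i)).right p))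
    calc ∑ p ∈ (ℛ k ((ℛ k a).right i)).index,
          (ℛ k a).left i ⊗ₜ[k] ((ℛ k ((ℛ k a).right i)).left p ⊗ₜ[k]
            Coalgebra.comul (R := k) ((ℛ k ((ℛ k a).right i)).right p))
        = (ℛ k a).left i ⊗ₜ[k] (∑ p ∈ (ℛ k ((ℛ k a).right i)).index,
            ∑ q ∈ (ℛ k ((ℛ k ((ℛ k a).right i)).right p)).index,
            (ℛ k ((ℛ k a).right i)).left p ⊗ₜ[k]
              ((ℛ k ((ℛ k ((ℛ k a).right i)).right p)).left q ⊗ₜ[k]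
                (ℛ k ((ℛ k ((ℛ k a).right i)).right p)).right q)) := by
          rw [TensorProduct.tmul_sum]
          refine Finset.sum_congr rfl fun p _ => ?_
          rw [← (ℛ k ((ℛ k ((ℛ k a).right i)).right p)).eq, TensorProduct.tmul_sum,
            TensorProduct.tmul_sum]
      _ = (ℛ k a).left i ⊗ₜ[k] (∑ p ∈ (ℛ k ((ℛ k a).right i)).index,
            ∑ q ∈ (ℛ k ((ℛ k ((ℛ k a).right i)).left p)).index,
            (ℛ k ((ℛ k ((ℛ k a).right i)).left p)).left q ⊗ₜ[k]
              ((ℛ k ((ℛ k ((ℛ k a).right i)).left p)).right q ⊗ₜ[k]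
                (ℛ k ((ℛ k a).right i)).right p)) := by rw [← hri]
      _ = _ := by
          rw [TensorProduct.tmul_sum]
          exact Finset.sum_congr rfl fun p _ => TensorProduct.tmul_sum _ _ _
  rw [hCL, hCR] at hC
  -- Step D : apply Θ to both sides of hC
  set Θ : A ⊗[k] (A ⊗[k] (A ⊗[k] A)) →ₗ[k] (A ⊗[k] A) :=
    (TensorProduct.map (LinearMap.mul' k A) (LinearMap.mul' k A)) ∘ₗ
    (TensorProduct.map
      (TensorProduct.map LinearMap.id (HopfAlgebra.antipode (R := k)))
      (TensorProduct.map LinearMap.id (HopfAlgebra.antipode (R := k)))) ∘ₗ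
    (TensorProduct.tensorTensorTensorComm k A A A A).toLinearMap ∘ₗ
    (TensorProduct.map LinearMap.id (TensorProduct.comm k A A).toLinearMap) ∘ₗ
    (TensorProduct.assoc k A A (A ⊗[k] A)).symm.toLinearMap with hΘ
  have hD := congrArg (⇑Θ) hC
  simp only [map_sum, hΘ, LinearMap.comp_apply, LinearEquiv.coe_coe,
    TensorProduct.assoc_symm_tmul, TensorProduct.map_tmul, TensorProduct.comm_tmul,
    TensorProduct.tensorTensorTensorComm_tmul, LinearMap.id_coe, id_eq,
    LinearMap.mul'_apply] at hD
  rw [hD]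
  -- Step E : collapse the right-hand side
  have hE : ∀ i ∈ (ℛ k a).index, ∀ p ∈ (ℛ k ((ℛ k a).right i)).index,
      ∑ q ∈ (ℛ k ((ℛ k ((ℛ k a).right i)).left p)).index,
        ((ℛ k a).left i * HopfAlgebra.antipode (R := k) ((ℛ k ((ℛ k a).right i)).right p)) ⊗ₜ[k]
        ((ℛ k ((ℛ k ((ℛ k a).right i)).left p)).left q *
          HopfAlgebra.antipode (R := k) ((ℛ k ((ℛ k ((ℛ k a).right i)).left p)).right q))
      = Coalgebra.counit (R := k) ((ℛ k ((ℛ k a).right i)).left p) •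
        (((ℛ k a).left i *
          HopfAlgebra.antipode (R := k) ((ℛ k ((ℛ k a).right i)).right p)) ⊗ₜ[k] (1 : A)) := by
    intro i _ p _
    rw [← TensorProduct.tmul_sum,
      HopfAlgebra.sum_mul_antipode_eq_smul (ℛ k ((ℛ k ((ℛ k a).right i)).left p)),
      TensorProduct.tmul_smul]
  rw [Finset.sum_congr rfl fun i hi => Finset.sum_congr rfl fun p hp => hE i hi p hp]
  have hF : ∀ i ∈ (ℛ k a).index,
      ∑ p ∈ (ℛ k ((ℛ k a).right i)).index,
        Coalgebra.counit (R := k) ((ℛ k ((ℛ k a).right i)).left p) •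
          (((ℛ k a).left i *
            HopfAlgebra.antipode (R := k) ((ℛ k ((ℛ k a).right i)).right p)) ⊗ₜ[k] (1 : A))
      = ((ℛ k a).left i * HopfAlgebra.antipode (R := k) ((ℛ k a).right i)) ⊗ₜ[k] (1 : A) := by
    intro i _
    have : ∀ p ∈ (ℛ k ((ℛ k a).right i)).index,
        Coalgebra.counit (R := k) ((ℛ k ((ℛ k a).right i)).left p) •
          (((ℛ k a).left i *
            HopfAlgebra.antipode (R := k) ((ℛ k ((ℛ k a).right i)).right p)) ⊗ₜ[k] (1 : A))
        = ((ℛ k a).left i *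
            HopfAlgebra.antipode (R := k)
              (Coalgebra.counit (R := k) ((ℛ k ((ℛ k a).right i)).left p) •
                (ℛ k ((ℛ k a).right i)).right p)) ⊗ₜ[k] (1 : A) := by
      intro p _
      rw [map_smul, mul_smul_comm, TensorProduct.smul_tmul']
    rw [Finset.sum_congr rfl this, ← TensorProduct.sum_tmul, ← Finset.mul_sum, ← map_sum,
      _root_.sum_counit_smul (ℛ k ((ℛ k a).right i))]
  rw [Finset.sum_congr rfl hF, ← TensorProduct.sum_tmul,
    HopfAlgebra.sum_mul_antipode_eq_smul (ℛ k a)]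
  simp [cunit, Algebra.algebraMap_eq_smul_one, Algebra.TensorProduct.one_def,
    TensorProduct.smul_tmul']

include hcc in
lemma comul_antipode_eq :
    (Coalgebra.comul (R := k) (A := A)) ∘ₗ (HopfAlgebra.antipode (R := k))
      = (TensorProduct.map (HopfAlgebra.antipode (R := k)) (HopfAlgebra.antipode (R := k)))
        ∘ₗ (Coalgebra.comul (R := k)) :=
  conv_inv_unique (Coalgebra.comul (R := k)) (Coalgebra.counit (R := k))
    HcoA HlA HrA conv_comulS_comul (conv_comul_SS hcc)


lemma C3 (a : A) :
    ∑ i ∈ (ℛ k a).index, ∑ p ∈ (ℛ k ((ℛ k a).right i)).index,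
      ((ℛ k a).left i * HopfAlgebra.antipode (R := k) ((ℛ k ((ℛ k a).right i)).left p)) ⊗ₜ[k]
        (ℛ k ((ℛ k a).right i)).right p
    = (1 : A) ⊗ₜ[k] a := by
  have hx := Coalgebra.sum_tmul_tmul_eq (ℛ k a)
    (fun i => ℛ k ((ℛ k a).left i)) (fun i => ℛ k ((ℛ k a).right i))
  set Φ : A ⊗[k] (A ⊗[k] A) →ₗ[k] A ⊗[k] A :=
    (TensorProduct.map (LinearMap.mul' k A) LinearMap.id) ∘ₗ
    (TensorProduct.map (TensorProduct.map LinearMap.id (HopfAlgebra.antipode (R := k)))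
      LinearMap.id) ∘ₗ
    (TensorProduct.assoc k A A A).symm.toLinearMap with hΦ
  have hD := congrArg (⇑Φ) hx
  simp only [map_sum, hΦ, LinearMap.comp_apply, LinearEquiv.coe_coe,
    TensorProduct.assoc_symm_tmul, TensorProduct.map_tmul, LinearMap.id_coe, id_eq,
    LinearMap.mul'_apply] at hD
  rw [← hD]
  have e1 : ∀ i ∈ (ℛ k a).index,
      ∑ j ∈ (ℛ k ((ℛ k a).left i)).index,
        ((ℛ k ((ℛ k a).left i)).left j *
          HopfAlgebra.antipode (R := k) ((ℛ k ((ℛ k a).left i)).right j)) ⊗ₜ[k] (ℛ k a).right i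
      = (1 : A) ⊗ₜ[k] (Coalgebra.counit (R := k) ((ℛ k a).left i) • (ℛ k a).right i) := by
    intro i _
    rw [← TensorProduct.sum_tmul, HopfAlgebra.sum_mul_antipode_eq_smul (ℛ k ((ℛ k a).left i)),
      TensorProduct.smul_tmul]
  rw [Finset.sum_congr rfl e1, ← TensorProduct.tmul_sum, _root_.sum_counit_smul (ℛ k a)]

end Hopf


end RotaBaxterAux


variable (k : Type u) (A : Type v) [CommRing k] [Semiring A] [HopfAlgebra k A]

open scoped Coalgebra

/-- The antipode `S` of a cocommutative Hopf algebra is a Rota-Baxter operator: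
it is a coalgebra homomorphism and, in Sweedler notation,
`S(a)S(b) = S(a₍₁₎ S(a₍₂₎) b S(S(a₍₃₎)))` for all `a, b`. -/
theorem antipode_isRotaBaxter
    (hcc : ∀ a : A, TensorProduct.comm k A A (Coalgebra.comul (R := k) a)
      = Coalgebra.comul (R := k) a) :
    (∀ a : A, Coalgebra.comul (R := k) (HopfAlgebra.antipode (R := k) a)
        = TensorProduct.map (HopfAlgebra.antipode (R := k)) (HopfAlgebra.antipode (R := k))
            (Coalgebra.comul (R := k) a)) ∧
    (∀ a : A, Coalgebra.counit (R := k) (HopfAlgebra.antipode (R := k) a)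
        = Coalgebra.counit (R := k) a) ∧
    (∀ a b : A, HopfAlgebra.antipode (R := k) a * HopfAlgebra.antipode (R := k) b
        = HopfAlgebra.antipode (R := k) (rbRHS k A (a ⊗ₜ[k] b))) := by
  classical
  refine ⟨fun a => ?_, fun a => counit_S a, fun a b => ?_⟩
  · have h := LinearMap.congr_fun (comul_antipode_eq hcc) a
    simpa using h
  · have hS2 : ∀ v : A, HopfAlgebra.antipode (R := k)
        (HopfAlgebra.antipode (R := k) v) = v := by
      intro v
      have h := LinearMap.congr_fun (S_S_eq_id hcc) v
      simpa using h
    have hrb : rbRHS k A (a ⊗ₜ[k] b)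
        = ∑ i ∈ (ℛ k a).index, ∑ p ∈ (ℛ k ((ℛ k a).right i)).index,
            (ℛ k a).left i *
              (HopfAlgebra.antipode (R := k) ((ℛ k ((ℛ k a).right i)).left p) *
                (b * (ℛ k ((ℛ k a).right i)).right p)) := by
      rw [rbRHS]
      simp only [LinearMap.comp_apply, TensorProduct.map_tmul, LinearMap.id_coe, id_eq]
      rw [← (ℛ k a).eq]
      simp only [map_sum, TensorProduct.sum_tmul, TensorProduct.map_tmul,
        LinearMap.id_coe, id_eq]
      refine Finset.sum_congr rfl fun i _ => ?_
      rw [← (ℛ k ((ℛ k a).right i)).eq]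
      simp only [TensorProduct.tmul_sum, TensorProduct.sum_tmul, map_sum,
        TensorProduct.map_tmul, LinearMap.id_coe, id_eq, LinearMap.comp_apply,
        TensorProduct.assoc_tmul, TensorProduct.comm_tmul, LinearEquiv.coe_coe,
        LinearMap.mul'_apply, hS2]
    have hC3 := congrArg (⇑(LinearMap.mul' k A ∘ₗ
        TensorProduct.map LinearMap.id (LinearMap.mulLeft k b))) (C3 a)
    simp only [map_sum, LinearMap.comp_apply, TensorProduct.map_tmul, LinearMap.id_coe,
      id_eq, LinearMap.mulLeft_apply, LinearMap.mul'_apply, one_mul] at hC3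
    have hba : rbRHS k A (a ⊗ₜ[k] b) = b * a := by
      rw [hrb, ← hC3]
      exact Finset.sum_congr rfl fun i _ => Finset.sum_congr rfl fun p _ =>
        (mul_assoc _ _ _).symm
    rw [hba, anti_mul]
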